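/- Let (B, ⌊·,·⌋) be an SSD space, f a proper convex function on B with f ≥ q on B, a ∈ P_q(f) (i.e., f(a) = q(a)), and b ∈ B. Then ⌊b,a⌋ ≤ q(a) + f(b). -/

import Mathlib

lemma aux_small_t {x c : ℝ} (h : ∀ t : ℝ, 0 < t → t ≤ 1 → x ≤ t * c) : x ≤ 0 := by
  by_contra hx
  push_neg at hx
  rcases le_or_gt c 0 with hc | hc
  · nlinarith [h 1 one_pos le_rfl]
  · have ht0 : (0:ℝ) < min 1 (x / (2 * c)) := by positivity
    have ht := h (min 1 (x / (2 * c))) ht0 (min_le_left _ _)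
    have h2 : min 1 (x / (2 * c)) * c ≤ (x / (2 * c)) * c :=
      mul_le_mul_of_nonneg_right (min_le_right _ _) hc.le
    have h3 : (x / (2 * c)) * c = x / 2 := by field_simp
    linarith

theorem stmt_6 (B : Type*) [AddCommGroup B] [Module ℝ B] (hB : ∃ b : B, b ≠ 0)
    (br : B →ₗ[ℝ] B →ₗ[ℝ] ℝ) (hsym : ∀ b c, br b c = br c b)
    (q : B → ℝ) (hq : ∀ b, q b = br b b / 2)
    (f : B → EReal) (hproper : ∃ b, f b ≠ ⊤) (hreal : ∀ b, f b ≠ ⊥)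
    (hconv : ∀ x y : B, ∀ t : ℝ, 0 ≤ t → t ≤ 1 →
      f (t • x + (1 - t) • y) ≤ (t : EReal) * f x + ((1 - t : ℝ) : EReal) * f y)
    (hfq : ∀ b, (q b : EReal) ≤ f b)
    (a : B) (ha : f a = (q a : EReal)) (b : B) :
    ((br b a : ℝ) : EReal) ≤ (q a : EReal) + f b := by
  by_cases htop : f b = ⊤
  · rw [htop, EReal.add_top_of_ne_bot (by exact_mod_cast EReal.coe_ne_bot (q a))]
    exact le_top
  set F : ℝ := (f b).toReal with hFdef
  have hF : f b = (F : EReal) := (EReal.coe_toReal htop (hreal b)).symm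
  -- key real inequality along the segment
  have key : ∀ t : ℝ, 0 < t → t ≤ 1 →
      q (t • b + (1 - t) • a) ≤ t * F + (1 - t) * q a := by
    intro t ht ht1
    have h1 := (hfq (t • b + (1 - t) • a)).trans (hconv b a t ht.le ht1)
    rw [hF, ha, ← EReal.coe_mul, ← EReal.coe_mul, ← EReal.coe_add] at h1
    exact_mod_cast h1
  -- expansion of q along the segment
  have hexp : ∀ t : ℝ, q (t • b + (1 - t) • a)
      = (t ^ 2 * br b b + 2 * t * (1 - t) * br b a + (1 - t) ^ 2 * br a a) / 2 := by
    intro t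
    rw [hq]
    simp only [map_add, map_smul, LinearMap.add_apply, LinearMap.smul_apply, smul_eq_mul,
      hsym a b]
    ring
  -- derive x ≤ t*c for all small t
  have hle : br b a - q a - F ≤ 0 := by
    apply aux_small_t (c := br b a - q a - br b b / 2)
    intro t ht ht1
    have h1 := key t ht ht1
    rw [hexp t, hq a] at h1
    have h2 : t * (br b a - br a a / 2 - F) ≤ t * (t * (br b a - br a a / 2 - br b b / 2)) := by
      nlinarith [h1]
    have := (mul_le_mul_iff_right₀ ht).mp h2
    rw [hq a]
    linarith
  rw [hF, ← EReal.coe_add]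
  exact_mod_cast (by linarith : br b a ≤ q a + F)
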